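/- Let f : Fin n → Fin k be a function with Young stabilizer S_f, let λ_j = |f⁻¹(j)|, fix a ∈ Fin n and i ∈ Fin k with λ_i ≥ 1. The value f(g(a)) depends only on the right coset S_f·g of g, and the number of right cosets [g] of S_f in Perm (Fin n) with f(g(a)) = i equals (n−1)! / ((λ_i − 1)! · ∏_{j ≠ i} (λ_j)!). -/

import Mathlib

open Finset

/-- The Young stabilizer of a function `f : Fin n → Fin k`: the subgroup of permutations
`σ` of `Fin n` with `f ∘ σ = f`. -/
def youngStabilizer (n k : ℕ) (f : Fin n → Fin k) : Subgroup (Equiv.Perm (Fin n)) where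
  carrier := {σ : Equiv.Perm (Fin n) | f ∘ ⇑σ = f}
  one_mem' := by
    funext i
    simp
  mul_mem' := by
    intro σ τ hσ hτ
    funext i
    have h1 := congrFun hσ (τ i)
    have h2 := congrFun hτ i
    simp only [Function.comp_apply] at h1 h2 ⊢
    simp [Equiv.Perm.mul_apply, h1, h2]
  inv_mem' := by
    intro σ hσ
    funext i
    have h1 := congrFun hσ (σ⁻¹ i)
    simp only [Function.comp_apply, Equiv.Perm.coe_inv, Equiv.apply_symm_apply] at h1 ⊢
    exact h1.symm

section aux

variable {n k : ℕ} (f : Fin n → Fin k)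

lemma ys_wd (g g' : Equiv.Perm (Fin n))
    (h : Quotient.mk (QuotientGroup.rightRel (youngStabilizer n k f)) g =
        Quotient.mk (QuotientGroup.rightRel (youngStabilizer n k f)) g') :
    f ∘ ⇑g = f ∘ ⇑g' := by
  have h1 : g' * g⁻¹ ∈ youngStabilizer n k f :=
    QuotientGroup.rightRel_apply.mp (Quotient.exact h)
  have h2 : f ∘ ⇑(g' * g⁻¹) = f := h1
  funext x
  have h3 := congrFun h2 (g x)
  simpa using h3.symm

lemma ys_card : Nat.card (youngStabilizer n k f) =
    ∏ j : Fin k, Nat.factorial ((Finset.univ.filter fun x => f x = j).card) := by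
  have e : (youngStabilizer n k f) ≃ {g : Equiv.Perm (Fin n) // f ∘ ⇑g = f} :=
    Equiv.subtypeEquivRight fun _ => Iff.rfl
  rw [Nat.card_congr e, Nat.card_eq_fintype_card, DomMulAct.stabilizer_card]
  exact Finset.prod_congr rfl fun j _ => by rw [Fintype.card_subtype]


lemma fix_card (a : Fin n) :
    Nat.card {g : Equiv.Perm (Fin n) // g a = a} = Nat.factorial (n - 1) := by
  have e2 : {g : Equiv.Perm (Fin n) // g a = a} ≃
      {g : Equiv.Perm (Fin n) // ∀ x, ¬ x ≠ a → g x = x} :=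
    Equiv.subtypeEquivRight (fun g => by
      constructor
      · intro h x hx
        rw [not_not] at hx
        subst hx
        exact h
      · intro h
        exact h a (by simp))
  have e3 := (Equiv.Perm.subtypeEquivSubtypePerm (fun x : Fin n => x ≠ a)).symm
  rw [Nat.card_congr (e2.trans e3), Nat.card_eq_fintype_card, Fintype.card_perm]
  congr 1
  simp [Fintype.card_subtype_compl, Fintype.card_subtype_eq]

lemma eval_card (a : Fin n) (i : Fin k) :
    Nat.card {g : Equiv.Perm (Fin n) // f (g a) = i} =
      (Finset.univ.filter fun x => f x = i).card * Nat.factorial (n - 1) := by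
  have e : {g : Equiv.Perm (Fin n) // f (g a) = i} ≃
      {b : Fin n // f b = i} × {g : Equiv.Perm (Fin n) // g a = a} :=
    { toFun := fun g => ⟨⟨g.1 a, g.2⟩,
        ⟨Equiv.swap a (g.1 a) * g.1, by simp [Equiv.Perm.mul_apply]⟩⟩
      invFun := fun x => ⟨Equiv.swap a x.1.1 * x.2.1,
        by simp [Equiv.Perm.mul_apply, x.2.2, x.1.2]⟩
      left_inv := fun g => Subtype.ext (by simp [← mul_assoc])
      right_inv := by
        rintro ⟨⟨b, hb⟩, ⟨h, hh⟩⟩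
        have hb' : (Equiv.swap a b * h) a = b := by
          simp [Equiv.Perm.mul_apply, hh]
        refine Prod.ext ?_ ?_
        · exact Subtype.ext (by simp [hb'])
        · exact Subtype.ext (by simp [hb', ← mul_assoc]) }
  rw [Nat.card_congr e, Nat.card_prod, fix_card]
  congr 1
  rw [Nat.card_eq_fintype_card, Fintype.card_subtype]

lemma coset_card (c : Quotient (QuotientGroup.rightRel (youngStabilizer n k f))) :
    Nonempty ({g : Equiv.Perm (Fin n) //
        Quotient.mk (QuotientGroup.rightRel (youngStabilizer n k f)) g = c} ≃
      (youngStabilizer n k f)) := by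
  induction c using Quotient.inductionOn with
  | h g₀ =>
    refine ⟨(Equiv.subtypeEquiv (Equiv.mulRight g₀) fun h => ?_).symm⟩
    constructor
    · intro hh
      refine Quotient.sound (QuotientGroup.rightRel_apply.mpr ?_)
      simpa [mul_inv_rev, ← mul_assoc] using (youngStabilizer n k f).inv_mem hh
    · intro hh
      have h1 := QuotientGroup.rightRel_apply.mp (Quotient.exact hh)
      simpa [mul_inv_rev, ← mul_assoc] using (youngStabilizer n k f).inv_mem h1

end aux


/-- The value `f (g a)` depends only on the right coset of `g` modulo the Young
stabilizer, and the number of right cosets `[g]` with `f (g a) = i` equals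
`(n-1)! / ((λ_i - 1)! * ∏_{j ≠ i} (λ_j)!)` where `λ_j` is the cardinality of the
fiber of `f` over `j`. -/
theorem stmt2 (n k : ℕ) (f : Fin n → Fin k) (a : Fin n) (i : Fin k)
    (hi : 1 ≤ (Finset.univ.filter fun x => f x = i).card) :
    (∀ g g' : Equiv.Perm (Fin n),
      Quotient.mk (QuotientGroup.rightRel (youngStabilizer n k f)) g =
        Quotient.mk (QuotientGroup.rightRel (youngStabilizer n k f)) g' →
      f (g a) = f (g' a)) ∧
    Nat.card {c : Quotient (QuotientGroup.rightRel (youngStabilizer n k f)) //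
        ∃ g : Equiv.Perm (Fin n),
          Quotient.mk (QuotientGroup.rightRel (youngStabilizer n k f)) g = c ∧ f (g a) = i} =
      Nat.factorial (n - 1) /
        (Nat.factorial ((Finset.univ.filter fun x => f x = i).card - 1) *
          ∏ j ∈ Finset.univ.erase i,
            Nat.factorial ((Finset.univ.filter fun x => f x = j).card)) := by
  classical
  refine ⟨fun g g' h => congrFun (ys_wd f g g' h) a, ?_⟩
  set Λ : Fin k → ℕ := fun j => (Finset.univ.filter fun x => f x = j).card with hΛ
  set T := {c : Quotient (QuotientGroup.rightRel (youngStabilizer n k f)) //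
      ∃ g : Equiv.Perm (Fin n),
        Quotient.mk (QuotientGroup.rightRel (youngStabilizer n k f)) g = c ∧ f (g a) = i}
    with hT
  have hwd : ∀ (c : T) (g : {g : Equiv.Perm (Fin n) //
      Quotient.mk (QuotientGroup.rightRel (youngStabilizer n k f)) g = c.1}),
      f (g.1 a) = i := by
    rintro ⟨c, g', hg', hP⟩ ⟨g, hg⟩
    exact (congrFun (ys_wd f g' g (hg'.trans hg.symm)) a).symm.trans hP
  have e : {g : Equiv.Perm (Fin n) // f (g a) = i} ≃
      Σ c : T, {g : Equiv.Perm (Fin n) //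
        Quotient.mk (QuotientGroup.rightRel (youngStabilizer n k f)) g = c.1} :=
    { toFun := fun g =>
        ⟨⟨Quotient.mk (QuotientGroup.rightRel (youngStabilizer n k f)) g.1, g.1, rfl, g.2⟩,
          g.1, rfl⟩
      invFun := fun x => ⟨x.2.1, hwd x.1 x.2⟩
      left_inv := fun g => rfl
      right_inv := by
        rintro ⟨⟨c, hc⟩, g, hg⟩
        dsimp only at hg
        subst hg
        rfl }
  have e2 : (Σ c : T, {g : Equiv.Perm (Fin n) //
        Quotient.mk (QuotientGroup.rightRel (youngStabilizer n k f)) g = c.1}) ≃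
      T × (youngStabilizer n k f) :=
    (Equiv.sigmaCongrRight fun c : T => (coset_card f c.1).some).trans (Equiv.sigmaEquivProd _ _)
  have hcard : Nat.card T * Nat.card (youngStabilizer n k f) = Λ i * Nat.factorial (n - 1) := by
    rw [← Nat.card_prod, ← Nat.card_congr (e.trans e2)]
    exact eval_card f a i
  have hsplit : Nat.card (youngStabilizer n k f) =
      Λ i * (Nat.factorial (Λ i - 1) * ∏ j ∈ Finset.univ.erase i, Nat.factorial (Λ j)) := by
    rw [ys_card f, ← Finset.mul_prod_erase Finset.univ _ (Finset.mem_univ i), ← mul_assoc]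
    congr 1
    exact (Nat.mul_factorial_pred (Nat.one_le_iff_ne_zero.mp hi)).symm
  set D := Nat.factorial (Λ i - 1) * ∏ j ∈ Finset.univ.erase i, Nat.factorial (Λ j) with hD
  have hDpos : 0 < D := by
    refine Nat.mul_pos (Nat.factorial_pos _) (Finset.prod_pos fun j _ => Nat.factorial_pos _)
  have key : Λ i * (Nat.card T * D) = Λ i * Nat.factorial (n - 1) := by
    rw [← hcard, hsplit]
    ring
  have key2 : Nat.card T * D = Nat.factorial (n - 1) :=
    Nat.eq_of_mul_eq_mul_left hi key
  exact (Nat.div_eq_of_eq_mul_left hDpos key2.symm).symm
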